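/- Let u be a nonnegative subharmonic function on a domain containing the ball B_ρ(0) ⊂ ℝⁿ for some 0 < ρ ≤ 1. If sup_{B_ρ(0)} u ≤ N·ρ and |{u ≠ 0} ∩ B_ρ(0)| ≤ ε₀·|B_ρ(0)| for constants N, ε₀ ≥ 0, then sup_{B_{ρ/2}(0)} u ≤ N·ρ·ε₀·2ⁿ. -/

import Mathlib

open MeasureTheory Metric

theorem stmt7 {n : ℕ} (ρ : ℝ) (hρ0 : 0 < ρ) (hρ1 : ρ ≤ 1)
    (Ω : Set (EuclideanSpace ℝ (Fin n))) (hΩ : IsOpen Ω)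
    (hB : ball (0 : EuclideanSpace ℝ (Fin n)) ρ ⊆ Ω)
    (u : EuclideanSpace ℝ (Fin n) → ℝ) (hu0 : ∀ x ∈ Ω, 0 ≤ u x)
    (hsub : ∀ (y : EuclideanSpace ℝ (Fin n)) (r : ℝ), 0 < r → ball y r ⊆ Ω →
      u y ≤ ⨍ x in ball y r, u x ∂volume)
    (N ε₀ : ℝ) (hN : 0 ≤ N) (hε₀ : 0 ≤ ε₀)
    (h1 : ∀ x ∈ ball (0 : EuclideanSpace ℝ (Fin n)) ρ, u x ≤ N * ρ)
    (h2 : volume ({x | u x ≠ 0} ∩ ball (0 : EuclideanSpace ℝ (Fin n)) ρ) ≤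
      ENNReal.ofReal ε₀ * volume (ball (0 : EuclideanSpace ℝ (Fin n)) ρ)) :
    ∀ x ∈ ball (0 : EuclideanSpace ℝ (Fin n)) (ρ / 2), u x ≤ N * ρ * ε₀ * 2 ^ n := by
  intro y hy
  have hr : 0 < ρ / 2 := by linarith
  have hRHS : 0 ≤ N * ρ * ε₀ * 2 ^ n := by positivity
  have hsubset : ball y (ρ / 2) ⊆ ball (0 : EuclideanSpace ℝ (Fin n)) ρ := by
    apply ball_subset_ball'
    have := mem_ball.mp hy
    linarith
  set B := ball y (ρ / 2) with hBdef
  have key := hsub y (ρ / 2) hr (hsubset.trans hB)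
  rw [setAverage_eq, smul_eq_mul] at key
  by_cases hint : IntegrableOn u B volume
  · set s := {x | u x ≠ 0} ∩ B with hsdef
    set t := toMeasurable volume s ∩ B with htdef
    have hmt : MeasurableSet t := (measurableSet_toMeasurable _ _).inter measurableSet_ball
    have hst : s ⊆ t := fun x hx => ⟨subset_toMeasurable _ _ hx, hx.2⟩
    have htB : t ⊆ B := Set.inter_subset_right
    have hindic : ∀ x ∈ B, u x = t.indicator u x := by
      intro x hxB
      by_cases h0 : u x = 0
      · rw [Set.indicator_apply_eq_self.mpr (fun _ => h0)]
      · rw [Set.indicator_of_mem (hst ⟨h0, hxB⟩)]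
    have hI : ∫ x in B, u x = ∫ x in t, u x := by
      rw [setIntegral_congr_fun measurableSet_ball hindic, setIntegral_indicator hmt,
        Set.inter_eq_right.mpr htB]
    have hub : ∫ x in t, u x ≤ (volume t).toReal * (N * ρ) := by
      calc ∫ x in t, u x ≤ ∫ _x in t, N * ρ := by
            apply setIntegral_mono_on (hint.mono_set htB)
              (integrableOn_const ((measure_mono htB).trans_lt measure_ball_lt_top).ne)
              hmt
            intro x hx
            exact h1 x (hsubset (htB hx))
        _ = (volume t).toReal * (N * ρ) := by rw [setIntegral_const, smul_eq_mul]; rfl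
    have hmeas : volume t ≤ ENNReal.ofReal ε₀ * volume (ball (0 : EuclideanSpace ℝ (Fin n)) ρ) := by
      calc volume t ≤ volume (toMeasurable volume s) := measure_mono Set.inter_subset_left
        _ = volume s := measure_toMeasurable s
        _ ≤ volume ({x | u x ≠ 0} ∩ ball (0 : EuclideanSpace ℝ (Fin n)) ρ) :=
            measure_mono (Set.inter_subset_inter_right _ hsubset)
        _ ≤ _ := h2
    have hfin : ENNReal.ofReal ε₀ * volume (ball (0 : EuclideanSpace ℝ (Fin n)) ρ) ≠ ⊤ :=
      ENNReal.mul_ne_top ENNReal.ofReal_ne_top measure_ball_lt_top.ne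
    have hmeasR : (volume t).toReal ≤ ε₀ * (volume (ball (0 : EuclideanSpace ℝ (Fin n)) ρ)).toReal := by
      have := ENNReal.toReal_mono hfin hmeas
      rwa [ENNReal.toReal_mul, ENNReal.toReal_ofReal hε₀] at this
    -- volume computations
    have hvolB : (volume B).toReal = (ρ / 2) ^ n * (volume (ball (0 : EuclideanSpace ℝ (Fin n)) 1)).toReal := by
      rw [hBdef, Measure.addHaar_ball_of_pos volume y hr, ENNReal.toReal_mul, ENNReal.toReal_ofReal (by positivity),
        finrank_euclideanSpace_fin]
    have hvolρ : (volume (ball (0 : EuclideanSpace ℝ (Fin n)) ρ)).toReal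
        = ρ ^ n * (volume (ball (0 : EuclideanSpace ℝ (Fin n)) 1)).toReal := by
      rw [Measure.addHaar_ball_of_pos volume _ hρ0, ENNReal.toReal_mul, ENNReal.toReal_ofReal (by positivity),
        finrank_euclideanSpace_fin]
    set C := (volume (ball (0 : EuclideanSpace ℝ (Fin n)) 1)).toReal with hC
    have hCpos : 0 < C := ENNReal.toReal_pos (measure_ball_pos _ _ one_pos).ne' measure_ball_lt_top.ne
    have hint_le : ∫ x in B, u x ≤ ε₀ * (ρ ^ n * C) * (N * ρ) := by
      rw [hI]
      calc ∫ x in t, u x ≤ (volume t).toReal * (N * ρ) := hub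
        _ ≤ ε₀ * (ρ ^ n * C) * (N * ρ) := by
            rw [← hvolρ]; exact mul_le_mul_of_nonneg_right hmeasR (by positivity)
    calc u y ≤ (volume B).toReal⁻¹ * ∫ x in B, u x := key
      _ ≤ (volume B).toReal⁻¹ * (ε₀ * (ρ ^ n * C) * (N * ρ)) := by
          apply mul_le_mul_of_nonneg_left hint_le
          positivity
      _ = N * ρ * ε₀ * 2 ^ n := by
          rw [hvolB]
          field_simp
          rw [show (ρ / 2) ^ n * ε₀ * N * 2 ^ n = (ρ / 2 * 2) ^ n * ε₀ * N by rw [mul_pow]; ring,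
            div_mul_cancel₀ ρ two_ne_zero]
          ring
  · have : ∫ x in B, u x = 0 := integral_undef hint
    rw [this, mul_zero] at key
    linarith
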